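/- arXiv:2007.02490 — 3 statements merged into one kernel-verified Lean document; each statement's English description precedes it below -/
import Mathlib

section
/- Let U be a matrix on (ℂ^a ⊗ ℂ^b) ⊗ ℂ^c written as U = ∑_{j=1}^r Q_j ⊗ R_j with Q_1, ..., Q_r linearly independent matrices on ℂ^a ⊗ ℂ^b and R_1, ..., R_r linearly independent c×c matrices. If Q_1, ..., Q_n (for some n ≤ r) are product matrices (each Q_j = X'_j ⊗ Y'_j for some a×a matrix X'_j and b×b matrix Y'_j), then there exists a decomposition U = ∑_{i=1}^{sr(U)} X_i ⊗ Y_i ⊗ Z_i of minimal length in which X_j ⊗ Y_j = Q_j for every j = 1, ..., n. -/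
open Matrix Kronecker

section Aux

/-- Partially apply a linear functional on the second factor of a Kronecker structure. -/
noncomputable def partialApply {I K : Type*} (φ : Matrix K K ℂ →ₗ[ℂ] ℂ) :
    Matrix (I × K) (I × K) ℂ →ₗ[ℂ] Matrix I I ℂ where
  toFun M := Matrix.of fun p q => φ (Matrix.of fun k l => M (p, k) (q, l))
  map_add' M N := by
    ext p q
    show φ _ = φ _ + φ _
    rw [← map_add]
    rfl
  map_smul' t M := by
    ext p q
    show φ _ = t * φ _
    rw [← smul_eq_mul, ← _root_.map_smul]
    rfl

lemma partialApply_kron {I K : Type*} (φ : Matrix K K ℂ →ₗ[ℂ] ℂ)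
    (S : Matrix I I ℂ) (T : Matrix K K ℂ) :
    partialApply φ (S ⊗ₖ T) = φ T • S := by
  ext p q
  show φ (Matrix.of fun k l => (S ⊗ₖ T) (p, k) (q, l)) = φ T • S p q
  have h : (Matrix.of fun k l => (S ⊗ₖ T) (p, k) (q, l)) = S p q • T := by
    ext k l
    simp [Matrix.kroneckerMap_apply, smul_eq_mul]
  rw [h, _root_.map_smul, smul_eq_mul, smul_eq_mul, mul_comm]

lemma exists_dual_family {W : Type*} [AddCommGroup W] [Module ℂ W] {m : ℕ}
    {R : Fin m → W} (hR : LinearIndependent ℂ R) :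
    ∃ g : Fin m → (W →ₗ[ℂ] ℂ), ∀ j k, g j (R k) = if j = k then 1 else 0 := by
  classical
  have hs := (linearIndepOn_id_range_iff hR.injective).mpr hR
  have hmem : ∀ j : Fin m, R j ∈ hs.extend (Set.subset_univ _) :=
    fun j => hs.subset_extend _ ⟨j, rfl⟩
  refine ⟨fun j => (Module.Basis.extend hs).coord ⟨R j, hmem j⟩, fun j k => ?_⟩
  have hx : R k = (Module.Basis.extend hs) ⟨R k, hmem k⟩ :=
    (Module.Basis.extend_apply_self hs ⟨R k, hmem k⟩).symm
  rw [hx, Module.Basis.coord_apply, Module.Basis.repr_self_apply]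
  by_cases h : j = k
  · subst h; simp
  · rw [if_neg, if_neg h]
    intro he
    exact h (hR.injective (Subtype.ext_iff.mp he)).symm

lemma kron_stdBasis {A B C : Type*} [DecidableEq A] [DecidableEq B] [DecidableEq C]
    (u v : (A × B) × C) (z : ℂ) :
    (single u.1.1 v.1.1 (1:ℂ) ⊗ₖ single u.1.2 v.1.2 (1:ℂ)) ⊗ₖ
      single u.2 v.2 z = single u v z := by
  obtain ⟨⟨a1, b1⟩, c1⟩ := u
  obtain ⟨⟨a2, b2⟩, c2⟩ := v
  ext ⟨⟨i, j⟩, k⟩ ⟨⟨i', j'⟩, k'⟩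
  simp only [Matrix.kroneckerMap_apply, Matrix.single, Matrix.of_apply, Prod.mk.injEq]
  split_ifs <;> simp_all

lemma sum_kron {l m n p ι : Type*} (s : Finset ι) (f : ι → Matrix l m ℂ) (M : Matrix n p ℂ) :
    (∑ i ∈ s, f i) ⊗ₖ M = ∑ i ∈ s, f i ⊗ₖ M := by
  ext ⟨i, k⟩ ⟨j, l⟩
  simp [Matrix.sum_apply, Finset.sum_mul]

lemma kron_sum {l m n p ι : Type*} (s : Finset ι) (M : Matrix n p ℂ) (f : ι → Matrix l m ℂ) :
    M ⊗ₖ (∑ i ∈ s, f i) = ∑ i ∈ s, M ⊗ₖ f i := by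
  ext ⟨i, k⟩ ⟨j, l⟩
  simp [Matrix.sum_apply, Finset.mul_sum]

/-- The exchange lemma: given `P : Fin s → V` and a linearly independent family
`Q' : Fin n → V` inside the span of `P`, there is a family `E` of length `s`
starting with the `Q'` and otherwise made of vectors from the range of `P` (or zero),
such that every `P i` is a linear combination of the `E k`. -/
lemma exchange_lemma {V : Type*} [AddCommGroup V] [Module ℂ V] {s n : ℕ}
    (P : Fin s → V) (Q' : Fin n → V) (hQ' : LinearIndependent ℂ Q')
    (hmem : ∀ j, Q' j ∈ Submodule.span ℂ (Set.range P)) :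
    ∃ (E : Fin s → V) (M : Fin s → Fin s → ℂ),
      (∀ (j : Fin n) (h : (j : ℕ) < s), E ⟨j, h⟩ = Q' j) ∧
      (∀ i : Fin s, n ≤ (i : ℕ) → (E i = 0 ∨ E i ∈ Set.range P)) ∧
      (∀ i, P i = ∑ k, M i k • E k) ∧ n ≤ s := by
  classical
  set sQ := Set.range Q' with hsQ
  set sP := Set.range P with hsP
  have h1 : LinearIndepOn ℂ id sQ := (linearIndepOn_id_range_iff hQ'.injective).mpr hQ'
  set b := h1.extend (Set.subset_union_left (t := sP)) with hb
  have hQb : sQ ⊆ b := h1.subset_extend _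
  have hbt : b ⊆ sQ ∪ sP := h1.extend_subset _
  have hbli : LinearIndependent ℂ ((↑) : b → V) := h1.linearIndepOn_extend _
  have hspan : Submodule.span ℂ b = Submodule.span ℂ sP := by
    rw [h1.span_extend_eq_span]
    apply le_antisymm
    · rw [Submodule.span_le]
      rintro x (hx | hx)
      · obtain ⟨j, rfl⟩ := hx
        exact hmem j
      · exact Submodule.subset_span hx
    · exact Submodule.span_mono Set.subset_union_right
  have hbfin : b.Finite := ((Set.finite_range Q').union (Set.finite_range P)).subset hbt
  letI : Fintype b := hbfin.fintype
  have hb_s : b.ncard ≤ s := by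
    have h2 : Module.finrank ℂ (Submodule.span ℂ b) = b.toFinset.card :=
      finrank_span_set_eq_card hbli
    have h3 : Module.finrank ℂ (Submodule.span ℂ sP) ≤ s := by
      have := finrank_range_le_card (R := ℂ) P
      rw [Set.finrank] at this
      simpa using this
    rw [hspan] at h2
    rw [Set.ncard_eq_toFinset_card' b]
    omega
  have hq : sQ.ncard = n := by
    rw [hsQ, ← Set.image_univ, Set.ncard_image_of_injective _ hQ'.injective]
    simp [Set.ncard_univ]
  have hn_card : n ≤ b.ncard := by
    have := Set.ncard_le_ncard hQb hbfin
    omega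
  set D := b \ sQ with hD
  have hDfin : D.Finite := hbfin.subset Set.diff_subset
  letI : Fintype D := hDfin.fintype
  set nD := Fintype.card D with hnDdef
  have hnD : nD = D.ncard := by
    rw [← Nat.card_coe_set_eq, Nat.card_eq_fintype_card]
  have hdiff : D.ncard = b.ncard - sQ.ncard := Set.ncard_diff hQb (Set.finite_range Q')
  have hsum : n + nD ≤ s := by omega
  have hns : n ≤ s := by omega
  set eD : Fin nD ≃ D := (Fintype.equivFin D).symm with heD
  set E : Fin s → V := fun i =>
    if h : (i : ℕ) < n then Q' ⟨i, h⟩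
    else if h2 : (i : ℕ) - n < nD then ((eD ⟨(i : ℕ) - n, h2⟩ : D) : V) else 0 with hE
  have hbE : b ⊆ Set.range E := by
    intro x hx
    by_cases hxQ : x ∈ sQ
    · obtain ⟨j, rfl⟩ := hxQ
      refine ⟨⟨j, lt_of_lt_of_le j.isLt hns⟩, ?_⟩
      simp only [hE]
      rw [dif_pos j.isLt]
    · have hxD : x ∈ D := ⟨hx, hxQ⟩
      set m := eD.symm ⟨x, hxD⟩ with hm
      refine ⟨⟨n + (m : ℕ), by omega⟩, ?_⟩
      simp only [hE]
      rw [dif_neg (by omega)]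
      have hlt : n + (m : ℕ) - n < nD := by
        simpa [Nat.add_sub_cancel_left] using m.isLt
      rw [dif_pos hlt]
      have : (⟨n + (m : ℕ) - n, hlt⟩ : Fin nD) = m := by
        ext
        simp [Nat.add_sub_cancel_left]
      rw [this, hm, Equiv.apply_symm_apply]
  have hPE : ∀ i, ∃ c : Fin s → ℂ, ∑ k, c k • E k = P i := by
    intro i
    have hPi : P i ∈ Submodule.span ℂ (Set.range E) := by
      have : P i ∈ Submodule.span ℂ b := by
        rw [hspan]
        exact Submodule.subset_span ⟨i, rfl⟩
      exact Submodule.span_mono hbE this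
    exact (Submodule.mem_span_range_iff_exists_fun ℂ).mp hPi
  refine ⟨E, fun i => Classical.choose (hPE i), ?_, ?_, ?_, hns⟩
  · intro j h
    simp only [hE]
    rw [dif_pos j.isLt]
  · intro i hi
    simp only [hE]
    rw [dif_neg (by omega)]
    by_cases h2 : (i : ℕ) - n < nD
    · rw [dif_pos h2]
      right
      have hmem2 := (eD ⟨(i : ℕ) - n, h2⟩).2
      rcases hbt hmem2.1 with h | h
      · exact absurd h hmem2.2
      · exact h
    · rw [dif_neg h2]
      left; rfl
  · intro i
    exact (Classical.choose_spec (hPE i)).symm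

end Aux

/-- Tripartite Schmidt rank of a matrix on (ℂ^a ⊗ ℂ^b) ⊗ ℂ^c. -/
noncomputable def sr3 {a b c : ℕ}
    (U : Matrix ((Fin a × Fin b) × Fin c) ((Fin a × Fin b) × Fin c) ℂ) : ℕ :=
  sInf {r | ∃ (A : Fin r → Matrix (Fin a) (Fin a) ℂ)
    (B : Fin r → Matrix (Fin b) (Fin b) ℂ) (C : Fin r → Matrix (Fin c) (Fin c) ℂ),
    U = ∑ j, (A j ⊗ₖ B j) ⊗ₖ C j}

lemma sr3_set_nonempty {a b c : ℕ}
    (U : Matrix ((Fin a × Fin b) × Fin c) ((Fin a × Fin b) × Fin c) ℂ) :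
    {r | ∃ (A : Fin r → Matrix (Fin a) (Fin a) ℂ)
      (B : Fin r → Matrix (Fin b) (Fin b) ℂ) (C : Fin r → Matrix (Fin c) (Fin c) ℂ),
      U = ∑ j, (A j ⊗ₖ B j) ⊗ₖ C j}.Nonempty := by
  classical
  set ι := (((Fin a × Fin b) × Fin c) × ((Fin a × Fin b) × Fin c)) with hι
  set N := Fintype.card ι with hN
  set e : Fin N ≃ ι := (Fintype.equivFin ι).symm with he
  refine ⟨N, fun m => single (e m).1.1.1 (e m).2.1.1 1,
    fun m => single (e m).1.1.2 (e m).2.1.2 1,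
    fun m => single (e m).1.2 (e m).2.2 (U (e m).1 (e m).2), ?_⟩
  have key : ∀ p : ι,
      (single p.1.1.1 p.2.1.1 (1:ℂ) ⊗ₖ single p.1.1.2 p.2.1.2 1) ⊗ₖ
        single p.1.2 p.2.2 (U p.1 p.2) = single p.1 p.2 (U p.1 p.2) :=
    fun p => kron_stdBasis p.1 p.2 _
  calc U = ∑ i, ∑ j, single i j (U i j) := matrix_eq_sum_single U
    _ = ∑ p : ι, single p.1 p.2 (U p.1 p.2) := by rw [← Fintype.sum_prod_type']
    _ = ∑ p : ι, (single p.1.1.1 p.2.1.1 (1:ℂ) ⊗ₖ single p.1.1.2 p.2.1.2 1) ⊗ₖ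
        single p.1.2 p.2.2 (U p.1 p.2) :=
      Finset.sum_congr rfl fun p _ => (key p).symm
    _ = ∑ m : Fin N, (single (e m).1.1.1 (e m).2.1.1 (1:ℂ) ⊗ₖ
        single (e m).1.1.2 (e m).2.1.2 1) ⊗ₖ
        single (e m).1.2 (e m).2.2 (U (e m).1 (e m).2) :=
      (Equiv.sum_comp e _).symm

theorem stmt1 {a b c r n : ℕ}
    (U : Matrix ((Fin a × Fin b) × Fin c) ((Fin a × Fin b) × Fin c) ℂ)
    (Q : Fin r → Matrix (Fin a × Fin b) (Fin a × Fin b) ℂ)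
    (R : Fin r → Matrix (Fin c) (Fin c) ℂ)
    (hQ : LinearIndependent ℂ Q) (hR : LinearIndependent ℂ R)
    (hU : U = ∑ j, Q j ⊗ₖ R j)
    (hn : n ≤ r)
    (X' : Fin n → Matrix (Fin a) (Fin a) ℂ) (Y' : Fin n → Matrix (Fin b) (Fin b) ℂ)
    (hprod : ∀ j : Fin n, Q (Fin.castLE hn j) = X' j ⊗ₖ Y' j) :
    ∃ (X : ℕ → Matrix (Fin a) (Fin a) ℂ) (Y : ℕ → Matrix (Fin b) (Fin b) ℂ)
      (Z : ℕ → Matrix (Fin c) (Fin c) ℂ),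
      U = ∑ i ∈ Finset.range (sr3 U), (X i ⊗ₖ Y i) ⊗ₖ Z i ∧
      ∀ j : Fin n, X (j : ℕ) ⊗ₖ Y (j : ℕ) = Q (Fin.castLE hn j) := by
  classical
  set s := sr3 U with hs
  obtain ⟨A, B, C, hABC⟩ :
      ∃ (A : Fin s → Matrix (Fin a) (Fin a) ℂ)
        (B : Fin s → Matrix (Fin b) (Fin b) ℂ)
        (C : Fin s → Matrix (Fin c) (Fin c) ℂ),
        U = ∑ j, (A j ⊗ₖ B j) ⊗ₖ C j :=
    Nat.sInf_mem (sr3_set_nonempty U)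
  set P : Fin s → Matrix (Fin a × Fin b) (Fin a × Fin b) ℂ := fun i => A i ⊗ₖ B i with hP
  obtain ⟨g, hg⟩ := exists_dual_family hR
  have hQspan : ∀ j : Fin r, Q j ∈ Submodule.span ℂ (Set.range P) := by
    intro j
    have h1 : partialApply (g j) U = Q j := by
      rw [hU, map_sum]
      simp only [partialApply_kron, hg]
      simp
    have h2 : partialApply (g j) U = ∑ i, (g j) (C i) • P i := by
      rw [hABC, map_sum]
      simp only [partialApply_kron, hP]
    rw [← h1, h2]
    exact Submodule.sum_mem _ fun i _ =>
      Submodule.smul_mem _ _ (Submodule.subset_span ⟨i, rfl⟩)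
  have hQ'li : LinearIndependent ℂ (fun j : Fin n => Q (Fin.castLE hn j)) :=
    hQ.comp _ (Fin.castLE_injective hn)
  obtain ⟨E, M, hE1, hE2, hE3, hns⟩ :=
    exchange_lemma P (fun j => Q (Fin.castLE hn j)) hQ'li (fun j => hQspan _)
  set Zf : Fin s → Matrix (Fin c) (Fin c) ℂ := fun k => ∑ i, M i k • C i with hZf
  have hUE : U = ∑ k : Fin s, E k ⊗ₖ Zf k := by
    rw [hABC]
    calc ∑ i : Fin s, (A i ⊗ₖ B i) ⊗ₖ C i
        = ∑ i : Fin s, (∑ k, M i k • E k) ⊗ₖ C i :=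
          Finset.sum_congr rfl fun i _ => by rw [← hE3 i]
      _ = ∑ i : Fin s, ∑ k, M i k • (E k ⊗ₖ C i) := by
          refine Finset.sum_congr rfl fun i _ => ?_
          rw [sum_kron]
          exact Finset.sum_congr rfl fun k _ => smul_kronecker _ _ _
      _ = ∑ k : Fin s, ∑ i, M i k • (E k ⊗ₖ C i) := Finset.sum_comm
      _ = ∑ k : Fin s, E k ⊗ₖ Zf k := by
          refine Finset.sum_congr rfl fun k _ => ?_
          rw [hZf, kron_sum]
          exact Finset.sum_congr rfl fun i _ => ((kronecker_smul _ _ _)).symm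
  have hxy : ∀ i : Fin s, n ≤ (i : ℕ) →
      ∃ x : Matrix (Fin a) (Fin a) ℂ, ∃ y : Matrix (Fin b) (Fin b) ℂ, x ⊗ₖ y = E i := by
    intro i hi
    rcases hE2 i hi with h | ⟨i', hP'⟩
    · exact ⟨0, 0, by rw [h, Matrix.zero_kronecker]⟩
    · exact ⟨A i', B i', hP'⟩
  set X : ℕ → Matrix (Fin a) (Fin a) ℂ := fun m =>
    if h : m < n then X' ⟨m, h⟩
    else if h2 : m < s then (hxy ⟨m, h2⟩ (le_of_not_gt h)).choose else 0 with hX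
  set Y : ℕ → Matrix (Fin b) (Fin b) ℂ := fun m =>
    if h : m < n then Y' ⟨m, h⟩
    else if h2 : m < s then (hxy ⟨m, h2⟩ (le_of_not_gt h)).choose_spec.choose else 0 with hY
  set Z : ℕ → Matrix (Fin c) (Fin c) ℂ := fun m =>
    if h2 : m < s then Zf ⟨m, h2⟩ else 0 with hZ
  have hXY : ∀ i : Fin s, X (i : ℕ) ⊗ₖ Y (i : ℕ) = E i := by
    intro i
    by_cases h : (i : ℕ) < n
    · simp only [hX, hY]
      rw [dif_pos h, dif_pos h]
      rw [← hprod ⟨(i : ℕ), h⟩]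
      exact (hE1 ⟨(i : ℕ), h⟩ i.isLt).symm
    · simp only [hX, hY]
      rw [dif_neg h, dif_neg h, dif_pos i.isLt, dif_pos i.isLt]
      exact (hxy ⟨(i : ℕ), i.isLt⟩ (le_of_not_gt h)).choose_spec.choose_spec
  refine ⟨X, Y, Z, ?_, ?_⟩
  · rw [hUE, ← Fin.sum_univ_eq_sum_range (fun i => (X i ⊗ₖ Y i) ⊗ₖ Z i) s]
    refine Finset.sum_congr rfl fun i _ => ?_
    rw [hXY i]
    congr 1
    simp only [hZ]
    rw [dif_pos i.isLt]
  · intro j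
    have hj : (j : ℕ) < n := j.isLt
    simp only [hX, hY]
    rw [dif_pos hj, dif_pos hj, ← hprod j]
end

section
/- The 8×8 complex matrix U₅ = (1/2)·S₀⊗(I₂⊗I₂ + σ₁⊗σ₁ + σ₂⊗σ₂ + σ₃⊗σ₃) + S₃⊗I₂⊗σ₁ is unitary and has Schmidt rank exactly 5. -/
open Matrix Kronecker Complex

/-- The tripartite Schmidt rank of an 8×8 complex matrix, viewed as a matrix on
ℂ² ⊗ ℂ² ⊗ ℂ² via Kronecker products: the least `r` such that
`U = ∑ j, A j ⊗ₖ (B j ⊗ₖ C j)` with 2×2 matrices `A j`, `B j`, `C j`. -/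
noncomputable def sr (U : Matrix (Fin 2 × Fin 2 × Fin 2) (Fin 2 × Fin 2 × Fin 2) ℂ) : ℕ :=
  sInf {r | ∃ A B C : Fin r → Matrix (Fin 2) (Fin 2) ℂ,
    U = ∑ j, A j ⊗ₖ (B j ⊗ₖ C j)}

def S0 : Matrix (Fin 2) (Fin 2) ℂ := !![1, 0; 0, 0]
def S1 : Matrix (Fin 2) (Fin 2) ℂ := !![0, 1; 0, 0]
def S2 : Matrix (Fin 2) (Fin 2) ℂ := !![0, 0; 1, 0]
def S3 : Matrix (Fin 2) (Fin 2) ℂ := !![0, 0; 0, 1]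
def σ1 : Matrix (Fin 2) (Fin 2) ℂ := !![0, 1; 1, 0]
def σ2 : Matrix (Fin 2) (Fin 2) ℂ := !![0, -I; I, 0]
def σ3 : Matrix (Fin 2) (Fin 2) ℂ := !![1, 0; 0, -1]
def I2 : Matrix (Fin 2) (Fin 2) ℂ := 1

noncomputable def U₅ : Matrix (Fin 2 × Fin 2 × Fin 2) (Fin 2 × Fin 2 × Fin 2) ℂ :=
  (1 / 2 : ℂ) • (S0 ⊗ₖ (I2 ⊗ₖ I2 + σ1 ⊗ₖ σ1 + σ2 ⊗ₖ σ2 + σ3 ⊗ₖ σ3)) + S3 ⊗ₖ (I2 ⊗ₖ σ1)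

/-! ### Auxiliary definitions -/

/-- The swap matrix on `ℂ² ⊗ ℂ²`. -/
def Tswap : Matrix (Fin 2 × Fin 2) (Fin 2 × Fin 2) ℂ :=
  Matrix.of fun p q => if p.1 = q.2 ∧ p.2 = q.1 then 1 else 0

lemma hTswap : (1 / 2 : ℂ) • (I2 ⊗ₖ I2 + σ1 ⊗ₖ σ1 + σ2 ⊗ₖ σ2 + σ3 ⊗ₖ σ3) = Tswap := by
  ext ⟨b, c⟩ ⟨b', c'⟩
  fin_cases b <;> fin_cases c <;> fin_cases b' <;> fin_cases c' <;>
    simp [Tswap, I2, σ1, σ2, σ3, kroneckerMap_apply, Matrix.one_apply, Prod.ext_iff] <;> ring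

lemma hsplit : U₅ = S0 ⊗ₖ Tswap + S3 ⊗ₖ (I2 ⊗ₖ σ1) := by
  unfold U₅
  rw [← hTswap, Matrix.kronecker_smul]

lemma Tswap_mul_Tswap : Tswap * Tswap = 1 := by
  ext ⟨b, c⟩ ⟨b', c'⟩
  fin_cases b <;> fin_cases c <;> fin_cases b' <;> fin_cases c' <;>
    simp [Tswap, Matrix.mul_apply, Fintype.sum_prod_type, Fin.sum_univ_succ, Matrix.one_apply,
      Prod.ext_iff]

lemma Tswap_conjTranspose : Tswapᴴ = Tswap := by
  ext ⟨b, c⟩ ⟨b', c'⟩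
  fin_cases b <;> fin_cases c <;> fin_cases b' <;> fin_cases c' <;>
    simp [Tswap, Matrix.conjTranspose_apply]

lemma kron_conjTranspose {l m n p : Type*} (A : Matrix l m ℂ) (B : Matrix n p ℂ) :
    (A ⊗ₖ B)ᴴ = Aᴴ ⊗ₖ Bᴴ := by
  ext ⟨i, j⟩ ⟨k, l⟩
  simp [Matrix.conjTranspose_apply, kroneckerMap_apply, mul_comm]

lemma S0_mul_S0 : S0 * S0 = S0 := by ext i j; fin_cases i <;> fin_cases j <;> simp [S0, Matrix.mul_apply, Fin.sum_univ_succ]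
lemma S0_mul_S3 : S0 * S3 = 0 := by ext i j; fin_cases i <;> fin_cases j <;> simp [S0, S3, Matrix.mul_apply, Fin.sum_univ_succ]
lemma S3_mul_S0 : S3 * S0 = 0 := by ext i j; fin_cases i <;> fin_cases j <;> simp [S0, S3, Matrix.mul_apply, Fin.sum_univ_succ]
lemma S3_mul_S3 : S3 * S3 = S3 := by ext i j; fin_cases i <;> fin_cases j <;> simp [S3, Matrix.mul_apply, Fin.sum_univ_succ]
lemma σ1_mul_σ1 : σ1 * σ1 = 1 := by ext i j; fin_cases i <;> fin_cases j <;> simp [σ1, Matrix.mul_apply, Fin.sum_univ_succ, Matrix.one_apply]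
lemma S0_add_S3 : S0 + S3 = 1 := by
  rw [S0, S3, Matrix.one_fin_two]
  ext i j; fin_cases i <;> fin_cases j <;> simp
lemma S0_conjT : S0ᴴ = S0 := by
  ext i j; fin_cases i <;> fin_cases j <;> simp [S0]
lemma S3_conjT : S3ᴴ = S3 := by
  ext i j; fin_cases i <;> fin_cases j <;> simp [S3]
lemma σ1_conjT : σ1ᴴ = σ1 := by
  ext i j; fin_cases i <;> fin_cases j <;> simp [σ1]
lemma I2_conjT : I2ᴴ = I2 := by simp [I2]

lemma U5_unitary : U₅ ∈ Matrix.unitaryGroup (Fin 2 × Fin 2 × Fin 2) ℂ := by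
  rw [Matrix.mem_unitaryGroup_iff]
  have hstar : star U₅ = U₅ := by
    rw [hsplit, Matrix.star_eq_conjTranspose, Matrix.conjTranspose_add,
      kron_conjTranspose, kron_conjTranspose, kron_conjTranspose,
      S0_conjT, S3_conjT, σ1_conjT, I2_conjT, Tswap_conjTranspose]
  rw [hstar, hsplit, Matrix.add_mul, Matrix.mul_add, Matrix.mul_add,
    ← Matrix.mul_kronecker_mul, ← Matrix.mul_kronecker_mul,
    ← Matrix.mul_kronecker_mul, ← Matrix.mul_kronecker_mul,
    S0_mul_S0, S0_mul_S3, S3_mul_S0, S3_mul_S3, Tswap_mul_Tswap,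
    ← Matrix.mul_kronecker_mul, σ1_mul_σ1, Matrix.zero_kronecker, Matrix.zero_kronecker]
  show S0 ⊗ₖ 1 + 0 + (0 + S3 ⊗ₖ ((I2 * I2) ⊗ₖ 1)) = 1
  rw [show I2 * I2 = 1 from by simp [I2], Matrix.one_kronecker_one,
    add_zero, zero_add, ← Matrix.add_kronecker, S0_add_S3, Matrix.one_kronecker_one]
lemma decomp5 : U₅ = ∑ j : Fin 5,
    (![(1/2 : ℂ) • S0, (1/2 : ℂ) • S0, (1/2 : ℂ) • S0, (1/2 : ℂ) • S0, S3] j) ⊗ₖ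
    ((![I2, σ1, σ2, σ3, I2] j) ⊗ₖ (![I2, σ1, σ2, σ3, σ1] j)) := by
  unfold U₅
  simp only [Fin.sum_univ_five, Matrix.cons_val_zero, Matrix.cons_val_one, Matrix.head_cons,
    Matrix.cons_val_two, Matrix.cons_val_three, Matrix.cons_val_four, Matrix.tail_cons,
    Matrix.smul_kronecker, Matrix.kronecker_add, smul_add]

/-- enumeration of pairs -/
def ι : Fin 4 → Fin 2 × Fin 2 := ![(0,0), (0,1), (1,0), (1,1)]

def T0 : Matrix (Fin 4) (Fin 4) ℂ := !![1,0,0,0; 0,0,1,0; 0,1,0,0; 0,0,0,1]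
def T1 : Matrix (Fin 4) (Fin 4) ℂ := !![0,1,1,0; 0,0,0,0; 0,0,0,0; 0,1,1,0]

lemma T0_mul_T0 : T0 * T0 = 1 := by
  ext i j; fin_cases i <;> fin_cases j <;>
    simp [T0, Matrix.mul_apply, Fin.sum_univ_four, Matrix.one_apply] <;> rfl

lemma T1T0T1 : T1 * T0 * T1 = 0 := by
  ext i j; fin_cases i <;> fin_cases j <;>
    simp [T0, T1, Matrix.mul_apply, Fin.sum_univ_four, Matrix.vecHead, Matrix.vecTail]

lemma hval0 : ∀ i k : Fin 4, U₅ (0, (ι i).1, (ι k).1) (0, (ι i).2, (ι k).2) = T0 i k := by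
  intro i k; rw [hsplit]
  fin_cases i <;> fin_cases k <;>
    norm_num [T0, ι, Tswap, S0, S3, I2, σ1, kroneckerMap_apply, Matrix.one_apply, Matrix.add_apply]

lemma hval1 : ∀ i k : Fin 4, U₅ (1, (ι i).1, (ι k).1) (1, (ι i).2, (ι k).2) = T1 i k := by
  intro i k; rw [hsplit]
  fin_cases i <;> fin_cases k <;>
    norm_num [T1, ι, Tswap, S0, S3, I2, σ1, kroneckerMap_apply, Matrix.one_apply, Matrix.add_apply]

lemma core (A B C : Fin 4 → Matrix (Fin 2) (Fin 2) ℂ)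
    (hU : U₅ = ∑ j, A j ⊗ₖ (B j ⊗ₖ C j)) : False := by
  set P : Matrix (Fin 4) (Fin 4) ℂ := Matrix.of fun i j => B j (ι i).1 (ι i).2 with hP
  set Q : Matrix (Fin 4) (Fin 4) ℂ := Matrix.of fun j k => C j (ι k).1 (ι k).2 with hQ
  have hs : ∀ a a' : Fin 2, ∀ i k : Fin 4,
      (P * Matrix.diagonal (fun j => A j a a') * Q) i k
        = U₅ (a, (ι i).1, (ι k).1) (a', (ι i).2, (ι k).2) := by
    intro a a' i k
    rw [hU, Matrix.mul_assoc]
    simp only [Matrix.mul_apply, Matrix.diagonal_mul, Matrix.of_apply, hP, hQ,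
      Matrix.sum_apply, kroneckerMap_apply]
    refine Finset.sum_congr rfl fun j _ => ?_
    rw [Finset.sum_eq_single j (fun x _ hx => by simp [Matrix.diagonal_apply_ne' _ hx])
      (fun h => absurd (Finset.mem_univ j) h)]
    simp [Matrix.diagonal_apply_eq]; ring
  have hs0 : P * Matrix.diagonal (fun j => A j 0 0) * Q = T0 := by
    ext i k; rw [hs 0 0 i k, hval0]
  have hs1 : P * Matrix.diagonal (fun j => A j 1 1) * Q = T1 := by
    ext i k; rw [hs 1 1 i k, hval1]
  by_cases hD : ∀ j, A j 1 1 = 0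
  · have hzero : T1 = 0 := by
      rw [← hs1, show Matrix.diagonal (fun j => A j 1 1) = 0 by
        ext i j; simp [Matrix.diagonal_apply, hD], Matrix.mul_zero, Matrix.zero_mul]
    have : T1 0 1 = 0 := by rw [hzero]; rfl
    simp [T1] at this
  · push_neg at hD
    obtain ⟨j₀, hj₀⟩ := hD
    set t : ℂ := A j₀ 0 0 / A j₀ 1 1 with ht
    -- T0 - t • T1 is invertible
    have hM : (T0 - t • T1) * (T0 + t • (T0 * T1 * T0)) = 1 := by
      have e1 : T0 * (T0 * T1 * T0) = T1 * T0 := by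
        rw [← Matrix.mul_assoc, ← Matrix.mul_assoc, T0_mul_T0, Matrix.one_mul]
      have e2 : T1 * (T0 * T1 * T0) = 0 := by
        rw [show T1 * (T0 * T1 * T0) = (T1 * T0 * T1) * T0 by
          simp only [Matrix.mul_assoc], T1T0T1, Matrix.zero_mul]
      rw [Matrix.sub_mul, Matrix.mul_add, Matrix.mul_add, Matrix.smul_mul, Matrix.smul_mul,
        Matrix.mul_smul, Matrix.mul_smul, e1, e2, T0_mul_T0, smul_zero, smul_zero]
      abel
  -- now the determinant contradiction
    have hdetM : (T0 - t • T1).det ≠ 0 := by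
      intro h
      have := congrArg Matrix.det hM
      rw [Matrix.det_mul, h, zero_mul, Matrix.det_one] at this
      exact zero_ne_one this
    have hMPQ : T0 - t • T1 = P * Matrix.diagonal (fun j => A j 0 0 - t * A j 1 1) * Q := by
      rw [show Matrix.diagonal (fun j => A j 0 0 - t * A j 1 1)
          = Matrix.diagonal (fun j => A j 0 0) - t • Matrix.diagonal (fun j => A j 1 1) by
        ext i j
        simp only [Matrix.diagonal_apply, Matrix.sub_apply, Matrix.smul_apply, smul_eq_mul]
        rcases eq_or_ne i j with h | h
        · subst h; simp
        · simp only [if_neg h, mul_zero, sub_zero]]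
      rw [Matrix.mul_sub, Matrix.sub_mul, Matrix.mul_smul, Matrix.smul_mul, hs0, hs1]
    apply hdetM
    rw [hMPQ, Matrix.det_mul, Matrix.det_mul, Matrix.det_diagonal]
    rw [Finset.prod_eq_zero (Finset.mem_univ j₀) (by rw [ht, div_mul_cancel₀ _ hj₀, sub_self])]
    ring

lemma pad {m : ℕ} (hm : m ≤ 4) (A B C : Fin m → Matrix (Fin 2) (Fin 2) ℂ)
    (h : U₅ = ∑ j, A j ⊗ₖ (B j ⊗ₖ C j)) : False := by
  classical
  let ex : (Fin m → Matrix (Fin 2) (Fin 2) ℂ) → Fin 4 → Matrix (Fin 2) (Fin 2) ℂ :=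
    fun F j => if h : (j : ℕ) < m then F ⟨j, h⟩ else 0
  apply core (ex A) (ex B) (ex C)
  rw [h]
  have h1 : ∑ j : Fin 4, ex A j ⊗ₖ (ex B j ⊗ₖ ex C j)
      = ∑ j ∈ Finset.univ.map (Fin.castLEEmb hm),
          ex A j ⊗ₖ (ex B j ⊗ₖ ex C j) := by
    refine (Finset.sum_subset (Finset.subset_univ _) fun x _ hx => ?_).symm
    have hxm : ¬ (x : ℕ) < m := by
      intro hlt
      exact hx (Finset.mem_map.mpr ⟨⟨x, hlt⟩, Finset.mem_univ _, by
        simp [Fin.castLEEmb, Fin.castLE]⟩)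
    show ex A x ⊗ₖ (ex B x ⊗ₖ ex C x) = 0
    rw [show ex A x = 0 from dif_neg hxm, Matrix.zero_kronecker]
  rw [h1, Finset.sum_map]
  refine Finset.sum_congr rfl fun j _ => ?_
  have hA : ex A ((Fin.castLEEmb hm) j) = A j := by
    simp only [ex, Fin.coe_castLE, j.isLt, dif_pos, Fin.castLEEmb_apply, Fin.castLE]
  have hB : ex B ((Fin.castLEEmb hm) j) = B j := by
    simp only [ex, Fin.coe_castLE, j.isLt, dif_pos, Fin.castLEEmb_apply, Fin.castLE]
  have hC : ex C ((Fin.castLEEmb hm) j) = C j := by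
    simp only [ex, Fin.coe_castLE, j.isLt, dif_pos, Fin.castLEEmb_apply, Fin.castLE]
  rw [hA, hB, hC]

theorem stmt4 : U₅ ∈ Matrix.unitaryGroup (Fin 2 × Fin 2 × Fin 2) ℂ ∧ sr U₅ = 5 := by
  refine ⟨U5_unitary, ?_⟩
  have h5 : (5 : ℕ) ∈ {r | ∃ A B C : Fin r → Matrix (Fin 2) (Fin 2) ℂ,
      U₅ = ∑ j, A j ⊗ₖ (B j ⊗ₖ C j)} :=
    ⟨_, _, _, decomp5⟩
  refine le_antisymm (Nat.sInf_le h5) (le_csInf ⟨5, h5⟩ ?_)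
  rintro m ⟨A, B, C, hm⟩
  by_contra hlt
  push_neg at hlt
  exact pad (by omega) A B C hm
end

section
/- The three-qubit Fredkin gate F₃ = S₀⊗I₂⊗I₂ + S₃⊗(S₀⊗S₀ + S₁⊗S₂ + S₂⊗S₁ + S₃⊗S₃) (an 8×8 complex matrix, where the 4×4 factor is the swap gate) has Schmidt rank exactly 4. -/
open Matrix Kronecker Complex

noncomputable def F₃ : Matrix (Fin 2 × Fin 2 × Fin 2) (Fin 2 × Fin 2 × Fin 2) ℂ :=
  S0 ⊗ₖ (I2 ⊗ₖ I2) + S3 ⊗ₖ (S0 ⊗ₖ S0 + S1 ⊗ₖ S2 + S2 ⊗ₖ S1 + S3 ⊗ₖ S3)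

-- upper bound decomposition
lemma mem4 : (4 : ℕ) ∈ {r | ∃ A B C : Fin r → Matrix (Fin 2) (Fin 2) ℂ,
    F₃ = ∑ j, A j ⊗ₖ (B j ⊗ₖ C j)} := by
  refine ⟨![!![1,0;0,(1/2:ℂ)], !![0,0;0,(1/2:ℂ)], !![0,0;0,(1/2:ℂ)], !![0,0;0,(1/2:ℂ)]],
    ![I2, σ1, σ2, σ3], ![I2, σ1, σ2, σ3], ?_⟩
  ext ⟨i, j, k⟩ ⟨i', j', k'⟩
  simp only [F₃, S0, S1, S2, S3, σ1, σ2, σ3, I2, Fin.sum_univ_four, Matrix.add_apply,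
    Matrix.kroneckerMap_apply, Matrix.one_apply]
  fin_cases i <;> fin_cases j <;> fin_cases k <;> fin_cases i' <;> fin_cases j' <;> fin_cases k' <;>
    simp <;> norm_num

lemma rank_add_le' {n : Type*} [Fintype n] [DecidableEq n] (A B : Matrix n n ℂ) :
    (A + B).rank ≤ A.rank + B.rank := by
  rw [Matrix.rank, Matrix.rank, Matrix.rank, mulVecLin_add]
  refine le_trans ?_ (Submodule.finrank_add_le_finrank_add_finrank _ _)
  apply Submodule.finrank_mono
  rintro x ⟨y, rfl⟩
  exact Submodule.mem_sup.2 ⟨_, ⟨y, rfl⟩, _, ⟨y, rfl⟩, rfl⟩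

lemma rank_vmv {n m : Type*} [Fintype n] [Fintype m] [DecidableEq n] (w : m → ℂ) (v : n → ℂ) :
    (vecMulVec w v).rank ≤ 1 := by
  rw [vecMulVec_eq Unit]
  exact le_trans (Matrix.rank_mul_le_right _ _) (le_trans (rank_le_card_height _) (by simp))

lemma rank_sum_le {n : Type*} [Fintype n] [DecidableEq n] {r : ℕ}
    (N : Fin r → Matrix n n ℂ) : (∑ j, N j).rank ≤ ∑ j, (N j).rank := by
  classical
  induction r with
  | zero => simp [Matrix.rank]
  | succ r ih =>
    rw [Fin.sum_univ_succ, Fin.sum_univ_succ]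
    exact le_trans (rank_add_le' _ _) (add_le_add le_rfl (ih _))

lemma lower (r : ℕ) (h : r ∈ {r | ∃ A B C : Fin r → Matrix (Fin 2) (Fin 2) ℂ,
    F₃ = ∑ j, A j ⊗ₖ (B j ⊗ₖ C j)}) : 4 ≤ r := by
  obtain ⟨A, B, C, hF⟩ := h
  -- realigned swap matrix
  set M : Matrix (Fin 2 × Fin 2) (Fin 2 × Fin 2) ℂ :=
    fun p q => F₃ (1, p.1, q.1) (1, p.2, q.2) with hM
  have hMsum : M = ∑ j, vecMulVec (fun p : Fin 2 × Fin 2 => A j 1 1 * B j p.1 p.2)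
      (fun q : Fin 2 × Fin 2 => C j q.1 q.2) := by
    ext p q
    rw [hM]
    simp only [hF, Matrix.sum_apply, Matrix.kroneckerMap_apply, vecMulVec_apply]
    exact Finset.sum_congr rfl fun j _ => by ring
  have hMM : M * M = 1 := by
    ext p q
    rw [Matrix.mul_apply, hM]
    simp only [Matrix.mul_apply, Matrix.one_apply, F₃, S0, S1, S2, S3, I2, Matrix.add_apply,
      Matrix.kroneckerMap_apply, Matrix.one_apply]
    obtain ⟨a, b⟩ := p; obtain ⟨c, d⟩ := q
    fin_cases a <;> fin_cases b <;> fin_cases c <;> fin_cases d <;>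
      simp [Fintype.sum_prod_type, Fin.sum_univ_two, Prod.ext_iff]
  have h4 : M.rank = 4 := by
    rw [Matrix.rank_of_isUnit M ⟨⟨M, M, hMM, hMM⟩, rfl⟩]
    simp
  have : M.rank ≤ r := by
    rw [hMsum]
    refine le_trans (rank_sum_le _) ?_
    calc ∑ j : Fin r, (vecMulVec (fun p : Fin 2 × Fin 2 => A j 1 1 * B j p.1 p.2)
        (fun q : Fin 2 × Fin 2 => C j q.1 q.2)).rank ≤ ∑ _j : Fin r, 1 :=
          Finset.sum_le_sum fun j _ => rank_vmv _ _
      _ = r := by simp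
  omega

theorem stmt12 : sr F₃ = 4 := by
  refine le_antisymm (Nat.sInf_le mem4) (le_csInf ⟨4, mem4⟩ lower)
end
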